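/- Mixing entropy of a mixture is at most the entropy of the mixing distribution plus the average mixing entropy: let Ω ⊂ ℝ^n be a compact convex set, let β_1, …, β_m ∈ Ω, and let p be a probability distribution on {1,…,m}. Then S(Σ_x p_x β_x) ≤ H(p) + Σ_x p_x S(β_x), where H(p) = −Σ_x p_x log₂ p_x is the Shannon entropy. -/

import Mathlib

/-- Shannon entropy (base 2) of a finite probability vector. -/
noncomputable def shannon {n : ℕ} (p : Fin n → ℝ) : ℝ :=
  ∑ i, -(p i * Real.logb 2 (p i))

/-- Mixing (preparation) entropy of a point `ω` of a convex set `Ω`: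
the infimum of the Shannon entropies of the coefficients over all finite
convex decompositions of `ω` into extreme points of `Ω`. -/
noncomputable def mixEnt {V : Type*} [AddCommGroup V] [Module ℝ V]
    (Ω : Set V) (ω : V) : ℝ :=
  sInf {h : ℝ | ∃ (n : ℕ) (p : Fin n → ℝ) (v : Fin n → V),
    (∀ i, 0 ≤ p i) ∧ (∑ i, p i = 1) ∧ (∀ i, v i ∈ Ω.extremePoints ℝ) ∧
    ω = ∑ i, p i • v i ∧ h = shannon p}


open Set Module

/-- image of an extreme point under an injective affine map is extreme in the image. -/
lemma extremePoints_image_affine {E F : Type*} [AddCommGroup E] [Module ℝ E]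
    [AddCommGroup F] [Module ℝ F] (f : E →ᵃ[ℝ] F) (hf : Function.Injective f)
    {t : Set E} {e : E} (he : e ∈ t.extremePoints ℝ) :
    f e ∈ (f '' t).extremePoints ℝ := by
  rw [mem_extremePoints] at he ⊢
  refine ⟨Set.mem_image_of_mem f he.1, ?_⟩
  rintro _ ⟨a, ha, rfl⟩ _ ⟨b, hb, rfl⟩ hseg
  rw [← image_openSegment] at hseg
  obtain ⟨c, hc, hce⟩ := hseg
  obtain rfl : c = e := hf hce
  obtain ⟨rfl, rfl⟩ := he.2 a ha b hb hc
  exact ⟨rfl, rfl⟩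

lemma subsingleton_extreme {E : Type*} [AddCommGroup E] [Module ℝ E] [Subsingleton E]
    {s : Set E} {x : E} (hx : x ∈ s) : x ∈ s.extremePoints ℝ := by
  rw [mem_extremePoints]
  exact ⟨hx, fun a _ b _ _ => ⟨Subsingleton.elim a x, Subsingleton.elim b x⟩⟩

/-- Reduction step: if a compact convex set lies in `x + K` for a submodule `K` of rank ≤ N,
and the Minkowski statement holds in dimension ≤ N, then it holds for this set. -/
lemma reduce_step (N : ℕ)
    (IH : ∀ (E : Type) [NormedAddCommGroup E] [NormedSpace ℝ E] [FiniteDimensional ℝ E]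
      (s : Set E), finrank ℝ E ≤ N → Convex ℝ s → IsCompact s →
      ∀ x ∈ s, x ∈ convexHull ℝ (s.extremePoints ℝ))
    {E : Type} [NormedAddCommGroup E] [NormedSpace ℝ E] [FiniteDimensional ℝ E]
    (K : Submodule ℝ E) (hK : finrank ℝ K ≤ N) {F : Set E} (hFconv : Convex ℝ F)
    (hFcomp : IsCompact F) {x : E} (hx : x ∈ F) (hFK : ∀ y ∈ F, y - x ∈ K) :
    x ∈ convexHull ℝ (F.extremePoints ℝ) := by
  classical
  -- affine embedding of K into E
  let f : K →ᵃ[ℝ] E :=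
    { toFun := fun y => x + (y : E)
      linear := K.subtype
      map_vadd' := by
        intro p v
        show x + ((v + p : K) : E) = (v : E) + (x + (p : E))
        push_cast
        abel }
  have hfinj : Function.Injective f := by
    intro a b hab
    have : (a : E) = b := by
      have := hab
      simpa [f] using this
    exact Subtype.ext this
  set t : Set K := f ⁻¹' F with ht
  have htconv : Convex ℝ t := hFconv.affine_preimage f
  have htclosed : IsClosed t := hFcomp.isClosed.preimage f.continuous_of_finiteDimensional
  obtain ⟨R, hR⟩ := hFcomp.isBounded.subset_closedBall (0 : E)
  have htbdd : Bornology.IsBounded t := by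
    refine (Metric.isBounded_closedBall (x := (0 : K)) (r := R + ‖x‖)).subset ?_
    intro y hy
    have h1 : ‖x + (y : E)‖ ≤ R := by
      have := hR hy
      simpa [Metric.mem_closedBall, dist_eq_norm, f] using this
    have h2 : ‖(y : E)‖ ≤ R + ‖x‖ := by
      have : (y : E) = (x + (y : E)) - x := by abel
      rw [this]
      calc ‖(x + (y : E)) - x‖ ≤ ‖x + (y : E)‖ + ‖x‖ := norm_sub_le _ _
        _ ≤ R + ‖x‖ := by linarith
    simpa [Metric.mem_closedBall, dist_eq_norm] using h2
  have htcomp : IsCompact t := Metric.isCompact_of_isClosed_isBounded htclosed htbdd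
  have h0t : (0 : K) ∈ t := by
    show f 0 ∈ F
    simpa [f] using hx
  have h0 : (0 : K) ∈ convexHull ℝ (t.extremePoints ℝ) :=
    IH K t hK htconv htcomp 0 h0t
  have himg : f '' t = F := by
    apply Subset.antisymm
    · rintro _ ⟨a, ha, rfl⟩; exact ha
    · intro y hy
      exact ⟨⟨y - x, hFK y hy⟩, by simpa [ht, f] using hy, by simp [f]⟩
  have hx' : x = f 0 := by simp [f]
  rw [hx']
  have := Set.mem_image_of_mem f h0
  rw [AffineMap.image_convexHull] at this
  refine convexHull_mono ?_ this
  rintro _ ⟨e, he, rfl⟩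
  have := extremePoints_image_affine f hfinj he
  rwa [himg] at this

/-- **Minkowski's theorem**: a compact convex set in a finite-dimensional normed space is
the convex hull of its extreme points. -/
theorem minkowski_aux : ∀ (N : ℕ) (E : Type) [NormedAddCommGroup E] [NormedSpace ℝ E]
    [FiniteDimensional ℝ E] (s : Set E), finrank ℝ E ≤ N → Convex ℝ s → IsCompact s →
    ∀ x ∈ s, x ∈ convexHull ℝ (s.extremePoints ℝ) := by
  intro N
  induction N with
  | zero =>
    intro E _ _ _ s hrank hconv hcomp x hx
    have : Subsingleton E := by
      have : finrank ℝ E = 0 := le_antisymm hrank (Nat.zero_le _)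
      exact finrank_zero_iff.mp this
    exact subset_convexHull ℝ _ (subsingleton_extreme hx)
  | succ N IH =>
    intro E _ _ _ s hrank hconv hcomp x hx
    by_cases hsub : Subsingleton E
    · exact subset_convexHull ℝ _ (subsingleton_extreme hx)
    have : Nontrivial E := not_subsingleton_iff_nontrivial.mp hsub
    by_cases hsp : affineSpan ℝ s = ⊤
    · -- full-dimensional case
      have hint : (interior s).Nonempty := hconv.interior_nonempty_iff_affineSpan_eq_top.mpr hsp
      obtain ⟨a₀, ha₀⟩ := hint
      -- every non-interior point of s is in the hull of extreme points
      have hbdry : ∀ y ∈ s, y ∉ interior s → y ∈ convexHull ℝ (s.extremePoints ℝ) := by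
        intro y hy hyint
        obtain ⟨l, hl⟩ := geometric_hahn_banach_open_point hconv.interior isOpen_interior hyint
        -- support inequality on all of s
        have hsupp : ∀ z ∈ s, l z ≤ l y := by
          intro z hz
          by_contra hzy
          push_neg at hzy
          have hc : (0:ℝ) < l z - l y := by linarith
          have hd : (0:ℝ) < l z - l a₀ := by have := hl a₀ ha₀; linarith
          set t : ℝ := min 1 ((l z - l y) / (l z - l a₀)) with htdef
          have ht0 : 0 < t := lt_min one_pos (div_pos hc hd)
          have ht1 : t ≤ 1 := min_le_left _ _
          have hmem : z + t • (a₀ - z) ∈ interior s :=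
            hconv.add_smul_sub_mem_interior hz ha₀ ⟨ht0, ht1⟩
          have hlt := hl _ hmem
          have hltval : l (z + t • (a₀ - z)) = l z + t * (l a₀ - l z) := by
            simp only [map_add, map_smul, map_sub, smul_eq_mul]
          rw [hltval] at hlt
          -- so t * (l z - l a₀) > l z - l y
          have h1 : l z - l y < t * (l z - l a₀) := by linarith
          have h2 : t * (l z - l a₀) ≤ l z - l y := by
            have : t ≤ (l z - l y) / (l z - l a₀) := min_le_right _ _
            calc t * (l z - l a₀) ≤ ((l z - l y) / (l z - l a₀)) * (l z - l a₀) := by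
                  exact mul_le_mul_of_nonneg_right this hd.le
              _ = l z - l y := by field_simp
          linarith
        -- the exposed face
        set F : Set E := s ∩ {z | l z = l y} with hFdef
        have hFexp : IsExposed ℝ s F := by
          intro _
          refine ⟨l, ?_⟩
          ext z
          constructor
          · rintro ⟨hz, hz2⟩
            exact ⟨hz, fun w hw => by rw [hz2]; exact hsupp w hw⟩
          · rintro ⟨hz, hz2⟩
            refine ⟨hz, le_antisymm (hsupp z hz) (hz2 y hy)⟩
        have hFext : IsExtreme ℝ s F := hFexp.isExtreme
        have hFcomp : IsCompact F :=
          hcomp.inter_right (isClosed_eq l.continuous continuous_const)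
        have hFconv : Convex ℝ F := hconv.inter (convex_hyperplane (f := fun z => l z) ⟨map_add l, map_smul l⟩ (l y))
        have hyF : y ∈ F := ⟨hy, rfl⟩
        -- kernel of l
        have hker : finrank ℝ (LinearMap.ker (l : E →ₗ[ℝ] ℝ)) ≤ N := by
          have hne : LinearMap.ker (l : E →ₗ[ℝ] ℝ) ≠ ⊤ := by
            intro h
            have : a₀ - y ∈ LinearMap.ker (l : E →ₗ[ℝ] ℝ) := h ▸ Submodule.mem_top
            have : l (a₀ - y) = 0 := this
            rw [map_sub] at this
            have := hl a₀ ha₀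
            linarith
          have := Submodule.finrank_lt hne
          omega
        have hyhull : y ∈ convexHull ℝ (F.extremePoints ℝ) := by
          refine reduce_step N IH (LinearMap.ker (l : E →ₗ[ℝ] ℝ)) hker hFconv hFcomp hyF ?_
          intro z hz
          have : l z = l y := hz.2
          simp [LinearMap.mem_ker, map_sub, this]
        exact convexHull_mono hFext.extremePoints_subset_extremePoints hyhull
      by_cases hxi : x ∈ interior s
      · -- interior point: line argument
        obtain ⟨v, hv⟩ := exists_ne (0 : E)
        have hvn : (0:ℝ) < ‖v‖ := norm_pos_iff.mpr hv
        set A : Set ℝ := {r : ℝ | x + r • v ∈ s} with hAdef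
        have hAclosed : IsClosed A := by
          have hcont : Continuous fun r : ℝ => x + r • v :=
            continuous_const.add (continuous_id.smul continuous_const)
          exact hcomp.isClosed.preimage hcont
        obtain ⟨R, hR⟩ := hcomp.isBounded.subset_closedBall (0 : E)
        have hAbdd : Bornology.IsBounded A := by
          refine (Metric.isBounded_closedBall (x := (0:ℝ)) (r := (R + ‖x‖)/‖v‖)).subset ?_
          intro r hr
          have h1 : ‖x + r • v‖ ≤ R := by
            have := hR hr
            simpa [Metric.mem_closedBall, dist_eq_norm] using this
          have h2 : ‖r • v‖ ≤ R + ‖x‖ := by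
            have : r • v = (x + r • v) - x := by abel
            rw [this]
            calc ‖(x + r • v) - x‖ ≤ ‖x + r • v‖ + ‖x‖ := norm_sub_le _ _
              _ ≤ R + ‖x‖ := by linarith
          rw [norm_smul, Real.norm_eq_abs] at h2
          have : |r| ≤ (R + ‖x‖)/‖v‖ := by
            rw [le_div_iff₀ hvn]
            exact h2
          simpa [Metric.mem_closedBall, Real.dist_eq] using this
        have hAcomp : IsCompact A := Metric.isCompact_of_isClosed_isBounded hAclosed hAbdd
        have h0A : (0:ℝ) ∈ A := by simp [hAdef, hx]
        obtain ⟨a, haA, haLB⟩ := hAcomp.exists_isLeast ⟨0, h0A⟩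
        obtain ⟨b, hbA, hbUB⟩ := hAcomp.exists_isGreatest ⟨0, h0A⟩
        have ha0 : a ≤ 0 := haLB h0A
        have hb0 : 0 ≤ b := hbUB h0A
        -- b is positive since x is interior
        obtain ⟨ε, hε, hball⟩ := Metric.mem_nhds_iff.mp (mem_interior_iff_mem_nhds.mp hxi)
        have hbpos : 0 < b := by
          have hδ : (0:ℝ) < ε / (2 * ‖v‖) := by positivity
          have : ε / (2 * ‖v‖) ∈ A := by
            show x + (ε / (2 * ‖v‖)) • v ∈ s
            apply hball
            simp only [Metric.mem_ball, dist_eq_norm]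
            rw [add_sub_cancel_left, norm_smul, Real.norm_eq_abs, abs_of_pos hδ]
            rw [div_mul_eq_mul_div, mul_comm]
            rw [div_lt_iff₀ (by positivity)]
            nlinarith
          have := hbUB this
          linarith
        set y := x + a • v with hydef
        set z := x + b • v with hzdef
        -- the endpoints are not interior
        have hnotint : ∀ c : ℝ, c ∈ A → (∀ d ∈ A, |d| ≤ |c| ∨ True) → True := fun _ _ _ => trivial
        have hyint : y ∉ interior s := by
          intro hyi
          obtain ⟨ε', hε', hball'⟩ := Metric.mem_nhds_iff.mp (mem_interior_iff_mem_nhds.mp hyi)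
          have hδ : (0:ℝ) < ε' / (2 * ‖v‖) := by positivity
          have : a - ε' / (2 * ‖v‖) ∈ A := by
            show x + (a - ε' / (2 * ‖v‖)) • v ∈ s
            apply hball'
            simp only [Metric.mem_ball, dist_eq_norm, hydef]
            have : x + (a - ε' / (2 * ‖v‖)) • v - (x + a • v) = (-(ε' / (2 * ‖v‖))) • v := by
              rw [sub_smul]; module
            rw [this, norm_smul, Real.norm_eq_abs, abs_neg, abs_of_pos hδ]
            rw [div_mul_eq_mul_div, mul_comm]
            rw [div_lt_iff₀ (by positivity)]
            nlinarith
          have := haLB this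
          linarith
        have hzint : z ∉ interior s := by
          intro hzi
          obtain ⟨ε', hε', hball'⟩ := Metric.mem_nhds_iff.mp (mem_interior_iff_mem_nhds.mp hzi)
          have hδ : (0:ℝ) < ε' / (2 * ‖v‖) := by positivity
          have : b + ε' / (2 * ‖v‖) ∈ A := by
            show x + (b + ε' / (2 * ‖v‖)) • v ∈ s
            apply hball'
            simp only [Metric.mem_ball, dist_eq_norm, hzdef]
            have : x + (b + ε' / (2 * ‖v‖)) • v - (x + b • v) = (ε' / (2 * ‖v‖)) • v := by
              rw [add_smul]; module
            rw [this, norm_smul, Real.norm_eq_abs, abs_of_pos hδ]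
            rw [div_mul_eq_mul_div, mul_comm]
            rw [div_lt_iff₀ (by positivity)]
            nlinarith
          have := hbUB this
          linarith
        have hy' : y ∈ convexHull ℝ (s.extremePoints ℝ) := hbdry y haA hyint
        have hz' : z ∈ convexHull ℝ (s.extremePoints ℝ) := hbdry z hbA hzint
        have hba : (0:ℝ) < b - a := by linarith
        have hba' : b - a ≠ 0 := ne_of_gt hba
        have h1 : b / (b - a) + -a / (b - a) = 1 := by field_simp; ring
        have hcomb : (b / (b - a)) • y + (-a / (b - a)) • z = x := by
          rw [hydef, hzdef]
          have h2 : b / (b - a) * a + -a / (b - a) * b = 0 := by field_simp; ring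
          have expand : (b / (b - a)) • (x + a • v) + (-a / (b - a)) • (x + b • v)
              = (b / (b - a) + -a / (b - a)) • x + (b / (b - a) * a + -a / (b - a) * b) • v := by
            rw [smul_add, smul_add, add_smul, add_smul, smul_smul, smul_smul]
            abel
          rw [expand, h1, h2, one_smul, zero_smul, add_zero]
        have := (convex_convexHull ℝ (s.extremePoints ℝ)) hy' hz'
          (div_nonneg hb0 hba.le) (div_nonneg (by linarith) hba.le) h1
        rwa [hcomb] at this
      · exact hbdry x hx hxi
    · -- degenerate case: s spans a proper affine subspace
      have hvs : vectorSpan ℝ s ≠ ⊤ := by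
        intro h
        exact hsp ((AffineSubspace.affineSpan_eq_top_iff_vectorSpan_eq_top_of_nonempty ℝ E E ⟨x, hx⟩).mpr h)
      have hK : finrank ℝ (vectorSpan ℝ s) ≤ N := by
        have := Submodule.finrank_lt hvs
        omega
      refine reduce_step N IH (vectorSpan ℝ s) hK hconv hcomp hx ?_
      intro y hy
      have := vsub_mem_vectorSpan ℝ hy hx
      simpa using this

lemma shannon_term_nonneg {p : ℝ} (h0 : 0 ≤ p) (h1 : p ≤ 1) : 0 ≤ -(p * Real.logb 2 p) := by
  have := Real.logb_nonpos (b := 2) one_lt_two h0 h1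
  nlinarith

lemma shannon_nonneg {k : ℕ} (p : Fin k → ℝ) (h0 : ∀ i, 0 ≤ p i) (hs : ∑ i, p i = 1) :
    0 ≤ shannon p := by
  refine Finset.sum_nonneg fun i _ => shannon_term_nonneg (h0 i) ?_
  calc p i ≤ ∑ j, p j := Finset.single_le_sum (fun j _ => h0 j) (Finset.mem_univ i)
    _ = 1 := hs

lemma mixEnt_bddBelow {V : Type*} [AddCommGroup V] [Module ℝ V] (Ω : Set V) (ω : V) :
    BddBelow {h : ℝ | ∃ (k : ℕ) (p : Fin k → ℝ) (v : Fin k → V),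
      (∀ i, 0 ≤ p i) ∧ (∑ i, p i = 1) ∧ (∀ i, v i ∈ Ω.extremePoints ℝ) ∧
      ω = ∑ i, p i • v i ∧ h = shannon p} := by
  refine ⟨0, ?_⟩
  rintro h ⟨k, p, v, h0, h1, _, _, rfl⟩
  exact shannon_nonneg p h0 h1

lemma mixEnt_nonneg {V : Type*} [AddCommGroup V] [Module ℝ V] (Ω : Set V) (ω : V) :
    0 ≤ mixEnt Ω ω := by
  refine Real.sInf_nonneg ?_
  rintro h ⟨k, p, v, h0, h1, _, _, rfl⟩
  exact shannon_nonneg p h0 h1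

/-- `mixEnt` is bounded by the entropy of any decomposition over any finite index type. -/
lemma mixEnt_le_of_decomp {V : Type*} [AddCommGroup V] [Module ℝ V] (Ω : Set V)
    {ι : Type} [Fintype ι] (q : ι → ℝ) (v : ι → V) (hq : ∀ i, 0 ≤ q i)
    (hsum : ∑ i, q i = 1) (hv : ∀ i, v i ∈ Ω.extremePoints ℝ) {ω : V}
    (hω : ω = ∑ i, q i • v i) :
    mixEnt Ω ω ≤ ∑ i, -(q i * Real.logb 2 (q i)) := by
  set e := Fintype.equivFin ι with he
  refine csInf_le (mixEnt_bddBelow Ω ω) ?_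
  refine ⟨Fintype.card ι, q ∘ e.symm, v ∘ e.symm, fun i => hq _, ?_, fun i => hv _, ?_, ?_⟩
  · exact (Equiv.sum_comp e.symm q).trans hsum
  · rw [hω]
    exact (Equiv.sum_comp e.symm (fun i => q i • v i)).symm
  · unfold shannon
    exact (Equiv.sum_comp e.symm (fun i => -(q i * Real.logb 2 (q i)))).symm

/-- splitting of an entropy term of a product -/
lemma entropy_term_mul (a b : ℝ) (ha : 0 ≤ a) (hb : 0 ≤ b) :
    -(a * b * Real.logb 2 (a * b))
      = b * -(a * Real.logb 2 a) + a * -(b * Real.logb 2 b) := by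
  by_cases ha0 : a = 0
  · simp [ha0]
  by_cases hb0 : b = 0
  · simp [hb0]
  rw [Real.logb_mul ha0 hb0]
  ring

/-- the mixing entropy of a mixture is at most the Shannon entropy
of the mixing distribution plus the average mixing entropy of the components. -/
theorem mixEnt_mixture_le {n m : ℕ} (Ω : Set (Fin n → ℝ))
    (hconv : Convex ℝ Ω) (hcomp : IsCompact Ω)
    (β : Fin m → (Fin n → ℝ)) (hβ : ∀ x, β x ∈ Ω)
    (p : Fin m → ℝ) (hp : ∀ x, 0 ≤ p x) (hpsum : ∑ x, p x = 1) :
    mixEnt Ω (∑ x, p x • β x) ≤ shannon p + ∑ x, p x * mixEnt Ω (β x) := by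
  classical
  -- each point of Ω has a decomposition into extreme points (Minkowski's theorem)
  have hdecomp : ∀ ω ∈ Ω, ∃ (k : ℕ) (q : Fin k → ℝ) (v : Fin k → (Fin n → ℝ)),
      (∀ i, 0 ≤ q i) ∧ (∑ i, q i = 1) ∧ (∀ i, v i ∈ Ω.extremePoints ℝ) ∧
      ω = ∑ i, q i • v i := by
    intro ω hω
    have := minkowski_aux (finrank ℝ (Fin n → ℝ)) (Fin n → ℝ) Ω le_rfl hconv hcomp ω hω
    rw [mem_convexHull_iff_exists_fintype] at this
    obtain ⟨ι, _, w, z, hw0, hw1, hz, hx⟩ := this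
    set e := Fintype.equivFin ι
    refine ⟨Fintype.card ι, w ∘ e.symm, z ∘ e.symm, fun i => hw0 _, ?_, fun i => hz _, ?_⟩
    · exact (Equiv.sum_comp e.symm w).trans hw1
    · rw [← hx]
      exact (Equiv.sum_comp e.symm (fun i => w i • z i)).symm
  have hne : ∀ x : Fin m, {h : ℝ | ∃ (k : ℕ) (q : Fin k → ℝ) (v : Fin k → (Fin n → ℝ)),
      (∀ i, 0 ≤ q i) ∧ (∑ i, q i = 1) ∧ (∀ i, v i ∈ Ω.extremePoints ℝ) ∧
      β x = ∑ i, q i • v i ∧ h = shannon q}.Nonempty := by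
    intro x
    obtain ⟨k, q, v, h0, h1, hv, hw⟩ := hdecomp (β x) (hβ x)
    exact ⟨shannon q, k, q, v, h0, h1, hv, hw, rfl⟩
  refine le_of_forall_pos_le_add ?_
  intro ε hε
  -- near-optimal decompositions of each component
  have hchoice : ∀ x : Fin m, ∃ (k : ℕ) (q : Fin k → ℝ) (v : Fin k → (Fin n → ℝ)),
      (∀ i, 0 ≤ q i) ∧ (∑ i, q i = 1) ∧ (∀ i, v i ∈ Ω.extremePoints ℝ) ∧
      β x = ∑ i, q i • v i ∧ shannon q < mixEnt Ω (β x) + ε := by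
    intro x
    obtain ⟨a, ha, halt⟩ := Real.lt_sInf_add_pos (hne x) hε
    obtain ⟨k, q, v, h0, h1, hv, hw, rfl⟩ := ha
    exact ⟨k, q, v, h0, h1, hv, hw, halt⟩
  choose k q v hq0 hq1 hqv hqw hqs using hchoice
  -- the combined decomposition over a sigma type
  set w : ((x : Fin m) × Fin (k x)) → ℝ := fun j => p j.1 * q j.1 j.2 with hwdef
  set u : ((x : Fin m) × Fin (k x)) → (Fin n → ℝ) := fun j => v j.1 j.2 with hudef
  have hsigma : ∀ {M : Type} [AddCommMonoid M] (f : ((x : Fin m) × Fin (k x)) → M),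
      ∑ j, f j = ∑ x, ∑ i, f ⟨x, i⟩ := by
    intro M _ f
    rw [← Finset.univ_sigma_univ, Finset.sum_sigma]
  have hw0 : ∀ j, 0 ≤ w j := fun j => mul_nonneg (hp j.1) (hq0 j.1 j.2)
  have hw1 : ∑ j, w j = 1 := by
    rw [hsigma]
    calc ∑ x, ∑ i, p x * q x i = ∑ x, p x * ∑ i, q x i := by
          simp_rw [Finset.mul_sum]
      _ = ∑ x, p x := by simp_rw [hq1, mul_one]
      _ = 1 := hpsum
  have hwu : (∑ x, p x • β x) = ∑ j, w j • u j := by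
    calc ∑ x, p x • β x = ∑ x, p x • ∑ i, q x i • v x i := by
          refine Finset.sum_congr rfl fun x _ => ?_
          rw [hqw x]
      _ = ∑ x, ∑ i, (p x * q x i) • v x i := by
          simp_rw [Finset.smul_sum, smul_smul]
      _ = ∑ j, w j • u j := (hsigma (fun j => (p j.1 * q j.1 j.2) • v j.1 j.2)).symm
  have hent : ∑ j, -(w j * Real.logb 2 (w j)) = shannon p + ∑ x, p x * shannon (q x) := by
    rw [hsigma]
    calc ∑ x, ∑ i, -(w ⟨x, i⟩ * Real.logb 2 (w ⟨x, i⟩))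
        = ∑ x, ∑ i, (q x i * -(p x * Real.logb 2 (p x))
            + p x * -(q x i * Real.logb 2 (q x i))) := by
          refine Finset.sum_congr rfl fun x _ => Finset.sum_congr rfl fun i _ => ?_
          exact entropy_term_mul (p x) (q x i) (hp x) (hq0 x i)
      _ = ∑ x, ((∑ i, q x i) * -(p x * Real.logb 2 (p x)) + p x * shannon (q x)) := by
          refine Finset.sum_congr rfl fun x _ => ?_
          rw [Finset.sum_add_distrib, ← Finset.sum_mul, ← Finset.mul_sum]
          rfl
      _ = ∑ x, (-(p x * Real.logb 2 (p x)) + p x * shannon (q x)) := by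
          simp_rw [hq1, one_mul]
      _ = shannon p + ∑ x, p x * shannon (q x) := by
          rw [Finset.sum_add_distrib]
          rfl
  have hmain := mixEnt_le_of_decomp Ω w u hw0 hw1 (fun j => hqv j.1 j.2) hwu
  rw [hent] at hmain
  have hsum2 : ∑ x, p x * shannon (q x) ≤ ∑ x, p x * mixEnt Ω (β x) + ε := by
    calc ∑ x, p x * shannon (q x) ≤ ∑ x, p x * (mixEnt Ω (β x) + ε) :=
          Finset.sum_le_sum fun x _ => mul_le_mul_of_nonneg_left (hqs x).le (hp x)
      _ = ∑ x, p x * mixEnt Ω (β x) + (∑ x, p x) * ε := by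
          simp_rw [mul_add]
          rw [Finset.sum_add_distrib, ← Finset.sum_mul]
      _ = ∑ x, p x * mixEnt Ω (β x) + ε := by rw [hpsum, one_mul]
  linarith
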